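/- There exists a universal constant C > 0 such that for every integer n ≥ 1, every integer k ≥ 2, and every probability vector P ∈ M_k with all p_i > 0, the variance of the KL divergence of the empirical distribution from the true distribution satisfies Var[D(P̂_{n,k}‖P)] ≤ C·k/n². -/

import Mathlib

noncomputable def empDist {n k : ℕ} (ω : Fin n → Fin k) (i : Fin k) : ℝ :=
  ((Finset.univ.filter (fun j => ω j = i)).card : ℝ) / n

open Classical in
noncomputable def probOf {n k : ℕ} (p : Fin k → ℝ) (E : Set (Fin n → Fin k)) : ℝ :=
  ∑ ω : Fin n → Fin k, if ω ∈ E then ∏ j, p (ω j) else 0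

noncomputable def klDiv {k : ℕ} (q p : Fin k → ℝ) : ℝ :=
  ∑ i, q i * Real.log (q i / p i)

noncomputable def expect {n k : ℕ} (p : Fin k → ℝ) (f : (Fin n → Fin k) → ℝ) : ℝ :=
  ∑ ω : Fin n → Fin k, (∏ j, p (ω j)) * f ω

noncomputable def var {n k : ℕ} (p : Fin k → ℝ) (f : (Fin n → Fin k) → ℝ) : ℝ :=
  expect p (fun ω => (f ω - expect p f) ^ 2)

namespace KLVar

open Finset Real

/-- count of letter `a` among the samples -/
def cnt {n k : ℕ} (ω : Fin n → Fin k) (a : Fin k) : ℕ := ∑ j, if ω j = a then 1 else 0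

variable {k : ℕ} {p : Fin k → ℝ}

lemma prodw_nonneg (hp : ∀ i, 0 ≤ p i) {m : ℕ} (ω : Fin m → Fin k) : 0 ≤ ∏ j, p (ω j) :=
  Finset.prod_nonneg fun j _ => hp (ω j)

lemma mass (hs : ∑ i, p i = 1) (m : ℕ) : (∑ ω : Fin m → Fin k, ∏ j, p (ω j)) = 1 := by
  have h := Finset.prod_univ_sum (fun _ : Fin m => (Finset.univ : Finset (Fin k)))
    (fun _ i => p i)
  rw [Fintype.piFinset_univ] at h
  rw [← h, hs, Finset.prod_const_one]

lemma expect_const (hs : ∑ i, p i = 1) {m : ℕ} (c : ℝ) : expect (n := m) p (fun _ => c) = c := by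
  rw [_root_.expect, ← Finset.sum_mul, mass hs, one_mul]

lemma expect_mono (hp : ∀ i, 0 ≤ p i) {m : ℕ} {f g : (Fin m → Fin k) → ℝ} (h : ∀ ω, f ω ≤ g ω) :
    expect p f ≤ expect p g :=
  Finset.sum_le_sum fun ω _ => mul_le_mul_of_nonneg_left (h ω) (prodw_nonneg hp ω)

lemma expect_nonneg (hp : ∀ i, 0 ≤ p i) {m : ℕ} {f : (Fin m → Fin k) → ℝ} (h : ∀ ω, 0 ≤ f ω) :
    0 ≤ expect p f :=
  Finset.sum_nonneg fun ω _ => mul_nonneg (prodw_nonneg hp ω) (h ω)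

lemma expect_add {m : ℕ} (f g : (Fin m → Fin k) → ℝ) :
    expect p (fun ω => f ω + g ω) = expect p f + expect p g := by
  simp [_root_.expect, mul_add, Finset.sum_add_distrib]

lemma expect_mul_left {m : ℕ} (c : ℝ) (f : (Fin m → Fin k) → ℝ) :
    expect p (fun ω => c * f ω) = c * expect p f := by
  simp [_root_.expect, Finset.mul_sum, mul_left_comm]

/-- marginalizing out coordinate `j` -/
lemma expect_sum {m : ℕ} {ι : Type*} (s : Finset ι) (G : ι → (Fin m → Fin k) → ℝ) :
    expect p (fun ω => ∑ b ∈ s, G b ω) = ∑ b ∈ s, expect p (G b) := by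
  simp [_root_.expect, Finset.mul_sum]
  rw [Finset.sum_comm]

lemma expect_insertNth {m : ℕ} (j : Fin (m+1)) (F : (Fin (m+1) → Fin k) → ℝ) :
    expect p F = ∑ b, p b * expect p (fun ω : Fin m → Fin k => F (j.insertNth b ω)) := by
  rw [_root_.expect,
    ← Equiv.sum_comp (Fin.insertNthEquiv (fun _ => Fin k) j)
      (fun ω' => (∏ i, p (ω' i)) * F ω'), Fintype.sum_prod_type]
  refine Finset.sum_congr rfl fun b _ => ?_
  rw [_root_.expect, Finset.mul_sum]
  refine Finset.sum_congr rfl fun ω _ => ?_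
  show (∏ x, p (j.insertNth (α := fun _ => Fin k) b ω x)) * F (j.insertNth b ω) = _
  rw [Fin.prod_univ_succAbove (fun x => p (j.insertNth (α := fun _ => Fin k) b ω x)) j]
  simp only [Fin.insertNth_apply_same, Fin.insertNth_apply_succAbove]
  rw [mul_assoc]

lemma update_insertNth_succAbove {m : ℕ} (j : Fin (m+1)) (b c : Fin k)
    (ω : Fin m → Fin k) (i : Fin m) :
    Function.update (j.insertNth b ω) (j.succAbove i) c = j.insertNth (α := fun _ => Fin k) b (Function.update ω i c) := by
  ext x
  rcases eq_or_ne x j with rfl | hx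
  · rw [Function.update_of_ne (Ne.symm (Fin.succAbove_ne x i)), Fin.insertNth_apply_same,
      Fin.insertNth_apply_same]
  · obtain ⟨i', rfl⟩ := Fin.exists_succAbove_eq hx
    simp only [Function.update_apply, Fin.insertNth_apply_succAbove,
      (Fin.succAbove_right_injective (p := j)).eq_iff]

lemma cnt_insertNth {m : ℕ} (j : Fin (m+1)) (b : Fin k) (ω : Fin m → Fin k) (a : Fin k) :
    cnt (j.insertNth b ω) a = (if b = a then 1 else 0) + cnt ω a := by
  rw [cnt, Fin.sum_univ_succAbove _ j]
  simp [Fin.insertNth_apply_same, Fin.insertNth_apply_succAbove, cnt]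

lemma cnt_update {n : ℕ} (ω : Fin n → Fin k) (j : Fin n) (b i : Fin k) :
    cnt (Function.update ω j b) i + (if ω j = i then 1 else 0)
      = cnt ω i + (if b = i then 1 else 0) := by
  have hfun : (fun j' => if Function.update ω j b j' = i then (1:ℕ) else 0)
      = Function.update (fun j' => if ω j' = i then 1 else 0) j (if b = i then 1 else 0) := by
    funext j'
    rcases eq_or_ne j' j with rfl | hj'
    · simp
    · simp [Function.update_of_ne hj']
  rw [cnt, hfun, Finset.sum_update_of_mem (Finset.mem_univ j), cnt,
    ← Finset.add_sum_erase Finset.univ _ (Finset.mem_univ j),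
    Finset.sdiff_singleton_eq_erase]
  omega

lemma one_le_cnt {n : ℕ} (ω : Fin n → Fin k) (j : Fin n) : 1 ≤ cnt ω (ω j) := by
  have h := Finset.single_le_sum (f := fun j' => if ω j' = ω j then (1:ℕ) else 0)
    (fun i _ => by positivity) (Finset.mem_univ j)
  simpa [cnt] using h

lemma sum_comp_cnt {n : ℕ} (ω : Fin n → Fin k) (F : Fin k → ℝ) :
    ∑ j, F (ω j) = ∑ a, (cnt ω a : ℝ) * F a := by
  have h1 : ∀ j, F (ω j) = ∑ a, (if ω j = a then (1:ℝ) else 0) * F a := by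
    intro j
    simp [ite_mul]
  simp only [h1]
  rw [Finset.sum_comm]
  refine Finset.sum_congr rfl fun a _ => ?_
  rw [← Finset.sum_mul, cnt]
  push_cast [apply_ite]
  rfl

/-- the insertion identity: `E_{m+1}[N h(N)] = (m+1) p_a E_m[h(N+1)]` -/
lemma ins (hs : ∑ i, p i = 1) {m : ℕ} (a : Fin k) (h : ℕ → ℝ) :
    expect p (fun ω : Fin (m+1) → Fin k => (cnt ω a : ℝ) * h (cnt ω a))
      = (m+1) * p a * expect p (fun ω : Fin m → Fin k => h (cnt ω a + 1)) := by
  have hrep : ∀ ω : Fin (m+1) → Fin k, (cnt ω a : ℝ) * h (cnt ω a)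
      = ∑ j : Fin (m+1), (if ω j = a then (1:ℝ) else 0) * h (cnt ω a) := by
    intro ω
    rw [← Finset.sum_mul]
    congr 1
    rw [cnt]
    push_cast [apply_ite]
    rfl
  calc expect p (fun ω : Fin (m+1) → Fin k => (cnt ω a : ℝ) * h (cnt ω a))
      = ∑ j : Fin (m+1), expect p
          (fun ω : Fin (m+1) → Fin k => (if ω j = a then (1:ℝ) else 0) * h (cnt ω a)) := by
        rw [← expect_sum]
        exact congrArg _ (funext fun ω => hrep ω)
    _ = ∑ j : Fin (m+1), p a * expect p (fun ω : Fin m → Fin k => h (cnt ω a + 1)) := by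
        refine Finset.sum_congr rfl fun j _ => ?_
        rw [expect_insertNth j]
        rw [Finset.sum_eq_single a]
        · congr 1
          refine congrArg _ (funext fun ω => ?_)
          rw [Fin.insertNth_apply_same, if_pos rfl, one_mul, cnt_insertNth, if_pos rfl,
            add_comm]
        · intro b _ hb
          have : ∀ ω : Fin m → Fin k,
              (if (j.insertNth (α := fun _ => Fin k) b ω) j = a then (1:ℝ) else 0)
                * h (cnt (j.insertNth b ω) a) = 0 := by
            intro ω
            rw [Fin.insertNth_apply_same, if_neg hb, zero_mul]
          rw [show (fun ω : Fin m → Fin k =>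
              (if (j.insertNth (α := fun _ => Fin k) b ω) j = a then (1:ℝ) else 0)
                * h (cnt (j.insertNth b ω) a)) = fun _ => (0:ℝ) from funext this]
          simp [_root_.expect]
        · intro ha
          exact absurd (Finset.mem_univ a) ha
    _ = (m+1) * p a * expect p (fun ω : Fin m → Fin k => h (cnt ω a + 1)) := by
        rw [Finset.sum_const, Finset.card_univ, Fintype.card_fin]
        push_cast
        ring

lemma mom1 (hs : ∑ i, p i = 1) (m : ℕ) (a : Fin k) :
    expect p (fun ω : Fin m → Fin k => (cnt ω a : ℝ)) = m * p a := by
  cases m with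
  | zero =>
    have : ∀ ω : Fin 0 → Fin k, (cnt ω a : ℝ) = 0 := by intro ω; simp [cnt]
    simp only [this]
    rw [expect_const hs]
    simp
  | succ m =>
    have h := ins hs (m := m) a (fun _ => 1)
    simp only [mul_one] at h
    rw [h, expect_const hs]
    push_cast
    ring

lemma mom2 (hs : ∑ i, p i = 1) (m : ℕ) (a : Fin k) :
    expect p (fun ω : Fin m → Fin k => (cnt ω a : ℝ)^2)
      = m * p a * (((m:ℝ) - 1) * p a + 1) := by
  cases m with
  | zero =>
    have : ∀ ω : Fin 0 → Fin k, ((cnt ω a : ℝ))^2 = 0 := by intro ω; simp [cnt]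
    simp only [this]
    rw [expect_const hs]
    simp
  | succ m =>
    have h := ins hs (m := m) a (fun x => (x : ℝ))
    have h2 : expect p (fun ω : Fin (m+1) → Fin k => (cnt ω a : ℝ)^2)
        = expect p (fun ω : Fin (m+1) → Fin k => (cnt ω a : ℝ) * (cnt ω a : ℝ)) := by
      refine congrArg _ (funext fun ω => ?_); ring
    have h3 : expect p (fun ω : Fin m → Fin k => ((cnt ω a + 1 : ℕ) : ℝ))
        = expect p (fun ω : Fin m → Fin k => (cnt ω a : ℝ) + 1) := by
      refine congrArg _ (funext fun ω => ?_); push_cast; ring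
    rw [h2, h, h3, expect_add, mom1 hs, expect_const hs]
    push_cast
    ring

lemma jensen_sq (hp : ∀ i, 0 ≤ p i) (hs : ∑ i, p i = 1) (x : Fin k → ℝ) :
    (∑ b, p b * x b)^2 ≤ ∑ b, p b * (x b)^2 := by
  have h := Finset.sum_mul_sq_le_sq_mul_sq Finset.univ (fun b => Real.sqrt (p b))
    (fun b => Real.sqrt (p b) * x b)
  have e1 : ∀ b, Real.sqrt (p b) * (Real.sqrt (p b) * x b) = p b * x b := by
    intro b
    rw [← mul_assoc, Real.mul_self_sqrt (hp b)]
  have e2 : ∀ b, (Real.sqrt (p b))^2 = p b := fun b => Real.sq_sqrt (hp b)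
  have e3 : ∀ b, (Real.sqrt (p b) * x b)^2 = p b * (x b)^2 := by
    intro b
    rw [mul_pow, e2]
  simp only [e1, e2, e3] at h
  rw [hs, one_mul] at h
  exact h

lemma sum_sq_decomp (hs : ∑ i, p i = 1) (d : Fin k → ℝ) (c : ℝ) :
    ∑ b, p b * (d b - c)^2
      = (∑ b, p b * (d b - ∑ b', p b' * d b')^2) + (∑ b', p b' * d b' - c)^2 := by
  set S := ∑ b', p b' * d b' with hS
  have expand : ∀ b, p b * (d b - c)^2
      = p b * (d b - S)^2 + (2*(S - c))*(p b * d b) - ((S - c)*(c + S))*p b := by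
    intro b; ring
  rw [Finset.sum_congr rfl fun b _ => expand b, Finset.sum_sub_distrib,
    Finset.sum_add_distrib, ← Finset.mul_sum, ← Finset.mul_sum, ← hS, hs]
  ring

lemma sum_sq_le_double (hp : ∀ i, 0 ≤ p i) (hs : ∑ i, p i = 1) (d : Fin k → ℝ) :
    ∑ b, p b * (d b - ∑ b', p b' * d b')^2
      ≤ ∑ b, p b * ∑ c, p c * (d c - d b)^2 := by
  set S := ∑ b', p b' * d b' with hS
  have hT : ∑ b, p b * (d b - S) = 0 := by
    rw [Finset.sum_congr rfl fun b _ => (mul_sub (p b) (d b) S),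
      Finset.sum_sub_distrib, ← Finset.sum_mul, hs, ← hS]
    ring
  set V := ∑ b, p b * (d b - S)^2 with hV
  have hVnn : 0 ≤ V := Finset.sum_nonneg fun b _ => mul_nonneg (hp b) (sq_nonneg _)
  have hRHS : ∑ b, p b * ∑ c, p c * (d c - d b)^2 = 2*V := by
    have inner : ∀ b, ∑ c, p c * (d c - d b)^2
        = V + (d b - S)^2 - 2*(d b - S)*(∑ c, p c * (d c - S)) := by
      intro b
      have e : ∀ c, p c * (d c - d b)^2
          = p c * (d c - S)^2 + (d b - S)^2 * p c - (2*(d b - S))*(p c * (d c - S)) := by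
        intro c; ring
      rw [Finset.sum_congr rfl fun c _ => e c, Finset.sum_sub_distrib,
        Finset.sum_add_distrib]
      simp only [← Finset.mul_sum, ← Finset.sum_mul]
      rw [hs, ← hV]
      ring
    rw [Finset.sum_congr rfl fun b _ => congrArg _ (inner b)]
    have e2 : ∀ b, p b * (V + (d b - S)^2 - 2*(d b - S)*(∑ c, p c * (d c - S)))
        = V * p b + p b * (d b - S)^2 - (2*(∑ c, p c * (d c - S)))*(p b * (d b - S)) := by
      intro b; ring
    rw [Finset.sum_congr rfl fun b _ => e2 b, Finset.sum_sub_distrib, Finset.sum_add_distrib]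
    simp only [← Finset.mul_sum, ← Finset.sum_mul]
    rw [hs, hT]
    ring
  rw [hRHS]
  linarith

/-- Efron–Stein / tensorization inequality -/
theorem efron_stein (hp : ∀ i, 0 ≤ p i) (hs : ∑ i, p i = 1) :
    ∀ (m : ℕ) (f : (Fin m → Fin k) → ℝ),
      var p f ≤ ∑ j : Fin m, expect p
        (fun ω => ∑ b, p b * (f (Function.update ω j b) - f ω)^2) := by
  intro m
  induction m with
  | zero =>
    intro f
    have he : ∀ h : (Fin 0 → Fin k) → ℝ, expect p h = h default := by
      intro h
      rw [_root_.expect, Finset.univ_unique, Finset.sum_singleton]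
      simp
    rw [var, he, he]
    simp
  | succ m IH =>
    intro f
    -- marginalize out coordinate 0
    have hA : ∀ F : (Fin (m+1) → Fin k) → ℝ, expect p F
        = expect p (fun ω : Fin m → Fin k =>
            ∑ b, p b * F ((0 : Fin (m+1)).insertNth b ω)) := by
      intro F
      rw [expect_insertNth (0 : Fin (m+1)) F,
        Finset.sum_congr rfl fun b _ =>
          (expect_mul_left (p b) (fun ω : Fin m → Fin k => F ((0 : Fin (m+1)).insertNth b ω))).symm,
        ← expect_sum]
    set g : (Fin m → Fin k) → ℝ :=
      fun ω => ∑ b, p b * f ((0 : Fin (m+1)).insertNth b ω) with hg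
    have hEg : expect p f = expect p g := hA f
    set μ := expect p f with hμ
    have step3 : var p f = expect p (fun ω : Fin m → Fin k =>
          ∑ b, p b * (f ((0 : Fin (m+1)).insertNth b ω) - g ω)^2) + var p g := by
      have h1 : var p f = expect p (fun ω : Fin m → Fin k =>
          ∑ b, p b * (f ((0 : Fin (m+1)).insertNth b ω) - μ)^2) := by
        rw [var, ← hμ]
        exact hA _
      have h2 : (fun ω : Fin m → Fin k => ∑ b, p b * (f ((0 : Fin (m+1)).insertNth b ω) - μ)^2)
          = fun ω => (∑ b, p b * (f ((0 : Fin (m+1)).insertNth b ω) - g ω)^2) + (g ω - μ)^2 :=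
        funext fun ω => sum_sq_decomp hs _ μ
      rw [h1, h2, expect_add]
      congr 1
      rw [var, ← hEg]
    have step4 : expect p (fun ω : Fin m → Fin k =>
          ∑ b, p b * (f ((0:Fin (m+1)).insertNth b ω) - g ω)^2)
        ≤ expect p (fun ω' : Fin (m+1) → Fin k =>
            ∑ c, p c * (f (Function.update ω' 0 c) - f ω')^2) := by
      rw [hA (fun ω' => ∑ c, p c * (f (Function.update ω' 0 c) - f ω')^2)]
      refine expect_mono hp fun ω => ?_
      have hrhs : ∀ b, (∑ c, p c * (f (Function.update ((0:Fin (m+1)).insertNth b ω) 0 c)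
              - f ((0:Fin (m+1)).insertNth b ω))^2)
          = ∑ c, p c * (f ((0:Fin (m+1)).insertNth c ω) - f ((0:Fin (m+1)).insertNth b ω))^2 := by
        intro b
        refine Finset.sum_congr rfl fun c _ => ?_
        rw [Fin.update_insertNth (α := fun _ => Fin k) (0 : Fin (m+1)) b c ω]
      calc ∑ b, p b * (f ((0:Fin (m+1)).insertNth b ω) - g ω)^2
          ≤ ∑ b, p b * ∑ c, p c * (f ((0:Fin (m+1)).insertNth c ω)
              - f ((0:Fin (m+1)).insertNth b ω))^2 :=
            sum_sq_le_double hp hs (fun b => f ((0:Fin (m+1)).insertNth b ω))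
        _ = _ := by
            refine Finset.sum_congr rfl fun b _ => ?_
            rw [hrhs b]
    have swap_sum : ∀ (X : Fin k → Fin k → ℝ),
        ∑ c, p c * ∑ b, p b * X b c = ∑ b, p b * ∑ c, p c * X b c := by
      intro X
      simp only [Finset.mul_sum]
      rw [Finset.sum_comm]
      exact Finset.sum_congr rfl fun b _ => Finset.sum_congr rfl fun c _ => by ring
    have step5 : var p g ≤ ∑ j : Fin m, expect p
        (fun ω' : Fin (m+1) → Fin k =>
          ∑ c, p c * (f (Function.update ω' j.succ c) - f ω')^2) := by
      refine le_trans (IH g) (Finset.sum_le_sum fun j _ => ?_)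
      rw [hA (fun ω' => ∑ c, p c * (f (Function.update ω' j.succ c) - f ω')^2)]
      refine expect_mono hp fun ω => ?_
      have upd2 : ∀ b c, Function.update ((0:Fin (m+1)).insertNth b ω) j.succ c
          = (0:Fin (m+1)).insertNth (α := fun _ => Fin k) b (Function.update ω j c) := by
        intro b c
        have h := update_insertNth_succAbove (0:Fin (m+1)) b c ω j
        rwa [Fin.zero_succAbove] at h
      calc ∑ c, p c * (g (Function.update ω j c) - g ω)^2
          ≤ ∑ c, p c * ∑ b, p b * (f ((0:Fin (m+1)).insertNth b (Function.update ω j c))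
                - f ((0:Fin (m+1)).insertNth b ω))^2 := by
            refine Finset.sum_le_sum fun c _ => mul_le_mul_of_nonneg_left ?_ (hp c)
            have hdiff : g (Function.update ω j c) - g ω
                = ∑ b, p b * (f ((0:Fin (m+1)).insertNth b (Function.update ω j c))
                    - f ((0:Fin (m+1)).insertNth b ω)) := by
              rw [hg, ← Finset.sum_sub_distrib]
              exact Finset.sum_congr rfl fun b _ => by ring
            rw [hdiff]
            exact jensen_sq hp hs _
        _ = ∑ b, p b * ∑ c, p c * (f (Function.update ((0:Fin (m+1)).insertNth b ω) j.succ c)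
              - f ((0:Fin (m+1)).insertNth b ω))^2 := by
            rw [swap_sum (fun b c => (f ((0:Fin (m+1)).insertNth (α := fun _ => Fin k) b
              (Function.update ω j c)) - f ((0:Fin (m+1)).insertNth b ω))^2)]
            refine Finset.sum_congr rfl fun b _ =>
              congrArg _ (Finset.sum_congr rfl fun c _ => ?_)
            rw [upd2 b c]
    rw [Fin.sum_univ_succ]
    calc var p f
        = _ := step3
      _ ≤ _ := add_le_add step4 step5

/-! ### analytic lemmas -/

lemma log_le_two_sqrt_sub {u : ℝ} (hu : 0 < u) : Real.log u ≤ 2*(Real.sqrt u - 1) := by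
  have h := Real.log_le_sub_one_of_pos (Real.sqrt_pos.mpr hu)
  rw [Real.log_sqrt hu.le] at h
  linarith

lemma two_sub_le_log {u : ℝ} (hu : 0 < u) : 2*(1 - 1/Real.sqrt u) ≤ Real.log u := by
  have h := log_le_two_sqrt_sub (inv_pos.mpr hu)
  rw [Real.log_inv, Real.sqrt_inv] at h
  rw [one_div]
  linarith

lemma sq_log_le {u : ℝ} (hu : 0 < u) :
    (Real.log u)^2 ≤ 4*(Real.sqrt u - 1)^2 + 4*(1 - 1/Real.sqrt u)^2 := by
  rcases le_or_gt 0 (Real.log u) with h | h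
  · have h2 := log_le_two_sqrt_sub hu
    nlinarith [sq_nonneg (1 - 1/Real.sqrt u)]
  · have h2 := two_sub_le_log hu
    nlinarith [sq_nonneg (Real.sqrt u - 1)]

lemma sq_sqrt_sub_le {x y : ℝ} (hx : 0 ≤ x) (hy : 0 < y) :
    (Real.sqrt x - Real.sqrt y)^2 ≤ (x - y)^2 / y := by
  rw [le_div_iff₀ hy]
  have hx' := Real.sq_sqrt hx
  have hy' := Real.sq_sqrt hy.le
  have h1 : x - y = (Real.sqrt x - Real.sqrt y) * (Real.sqrt x + Real.sqrt y) := by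
    nlinarith
  rw [h1]
  have h2 : (0:ℝ) ≤ Real.sqrt x * Real.sqrt y :=
    mul_nonneg (Real.sqrt_nonneg x) (Real.sqrt_nonneg y)
  nlinarith [sq_nonneg (Real.sqrt x - Real.sqrt y), sq_nonneg (Real.sqrt x + Real.sqrt y)]

lemma log_add_one_le {x : ℝ} (hx : 0 ≤ x) : Real.log (1 + x) ≤ 2 * Real.sqrt x := by
  have h1 : Real.log (1+x) ≤ 2*(Real.sqrt (1+x) - 1) := log_le_two_sqrt_sub (by linarith)
  have h2 : Real.sqrt (1+x) ≤ 1 + Real.sqrt x := by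
    have h3 : (1:ℝ) + x ≤ (1 + Real.sqrt x)^2 := by
      nlinarith [Real.sq_sqrt hx, Real.sqrt_nonneg x]
    calc Real.sqrt (1+x) ≤ Real.sqrt ((1 + Real.sqrt x)^2) := Real.sqrt_le_sqrt h3
      _ = 1 + Real.sqrt x := Real.sqrt_sq (by positivity)
  linarith

lemma mul_sq_log_le {x : ℝ} (h0 : 0 < x) (h1 : x ≤ 1) : x * (Real.log x)^2 ≤ 4 := by
  have h2 := two_sub_le_log h0
  have hlx : Real.log x ≤ 0 := Real.log_nonpos h0.le h1
  have hsx : 0 < Real.sqrt x := Real.sqrt_pos.mpr h0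
  have h3 : -Real.log x ≤ 2/Real.sqrt x := by
    rw [div_eq_mul_inv, ← one_div]
    linarith
  have h4 : (Real.log x)^2 ≤ (2/Real.sqrt x)^2 := by nlinarith
  have h5 : (2/Real.sqrt x)^2 = 4/x := by
    rw [div_pow, Real.sq_sqrt h0.le]
    norm_num
  rw [h5] at h4
  calc x * (Real.log x)^2 ≤ x * (4/x) := by
        exact mul_le_mul_of_nonneg_left h4 h0.le
    _ = 4 := by field_simp

/-- `r m = 1 - m log((m+1)/m)` -/
noncomputable def rr (m : ℕ) : ℝ := 1 - m * (Real.log (m+1) - Real.log m)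

lemma rr_nonneg (m : ℕ) : 0 ≤ rr m := by
  cases m with
  | zero => simp [rr]
  | succ m =>
    rw [rr]
    push_cast
    set M : ℝ := (m:ℝ) + 1 with hM
    clear_value M
    have hM0 : 0 < M := by rw [hM]; positivity
    have h1 : Real.log ((M+1)/M) ≤ (M+1)/M - 1 := Real.log_le_sub_one_of_pos (by positivity)
    rw [Real.log_div (by positivity) (by positivity)] at h1
    have h2 : (M+1)/M - 1 = 1/M := by field_simp; ring
    rw [h2] at h1
    have h3 : M * (Real.log (M+1) - Real.log M) ≤ M * (1/M) :=
      mul_le_mul_of_nonneg_left h1 hM0.le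
    have h4 : M * (1/M) = 1 := by field_simp
    linarith

lemma rr_le (m : ℕ) : rr m ≤ 1 / (m + 1) := by
  cases m with
  | zero => simp [rr]
  | succ m =>
    rw [rr]
    push_cast
    set M : ℝ := (m:ℝ) + 1 with hM
    clear_value M
    have hM0 : 0 < M := by rw [hM]; positivity
    have h1 : Real.log (M/(M+1)) ≤ M/(M+1) - 1 := Real.log_le_sub_one_of_pos (by positivity)
    rw [Real.log_div (by positivity) (by positivity)] at h1
    have h2 : M/(M+1) - 1 = -(1/(M+1)) := by field_simp; ring
    rw [h2] at h1
    have h3 : M * (1/(M+1)) ≤ M * (Real.log (M+1) - Real.log M) :=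
      mul_le_mul_of_nonneg_left (by linarith) hM0.le
    have h5 : M * (1/(M+1)) = M/(M+1) := by ring
    have h6 : 1 - M/(M+1) = 1/(M+1) := by field_simp; ring
    linarith

noncomputable def phi (t : ℝ) (m : ℕ) : ℝ := (Real.log (m+1) - Real.log t - rr m)^2

lemma sq_log_ratio_le {x t : ℝ} (hx : 0 < x) (ht : 0 < t) :
    (Real.log x - Real.log t)^2 ≤ 4*(x - t)^2/t^2 + 4*((x - t)^2/(t*x)) := by
  have hu : 0 < x/t := by positivity
  have hlog : Real.log x - Real.log t = Real.log (x/t) := (Real.log_div hx.ne' ht.ne').symm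
  have hsq := sq_log_le hu
  have hsd : Real.sqrt (x/t) = Real.sqrt x / Real.sqrt t := Real.sqrt_div hx.le t
  have hA : Real.sqrt x ^ 2 = x := Real.sq_sqrt hx.le
  have hB : Real.sqrt t ^ 2 = t := Real.sq_sqrt ht.le
  have hAne : Real.sqrt x ≠ 0 := (Real.sqrt_pos.mpr hx).ne'
  have hBne : Real.sqrt t ≠ 0 := (Real.sqrt_pos.mpr ht).ne'
  have h1 : (Real.sqrt (x/t) - 1)^2 = (Real.sqrt x - Real.sqrt t)^2 / t := by
    rw [hsd, div_sub_one hBne, div_pow, hB]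
  have h2 : (1 - 1/Real.sqrt (x/t))^2 = (Real.sqrt x - Real.sqrt t)^2 / x := by
    rw [hsd, one_div_div, one_sub_div hAne, div_pow, hA]
  have h3 : (Real.sqrt x - Real.sqrt t)^2 ≤ (x - t)^2 / t := sq_sqrt_sub_le hx.le ht
  rw [hlog]
  calc (Real.log (x/t))^2
      ≤ 4*((Real.sqrt x - Real.sqrt t)^2/t) + 4*((Real.sqrt x - Real.sqrt t)^2/x) := by
        rw [← h1, ← h2]
        linarith [hsq]
    _ ≤ 4*(((x - t)^2/t)/t) + 4*(((x - t)^2/t)/x) := by gcongr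
    _ = 4*(x - t)^2/t^2 + 4*((x - t)^2/(t*x)) := by
        rw [div_div, div_div]
        ring

set_option maxHeartbeats 1000000 in
/-- the key per-letter moment bound -/
lemma key (hp : ∀ i, 0 < p i) (hs : ∑ i, p i = 1) (a : Fin k) (m : ℕ) (t : ℝ)
    (ht0 : 0 < t) (ht1 : m * p a ≤ t) (ht2 : t ≤ (m+1) * p a) :
    t * expect p (fun ω : Fin m → Fin k => phi t (cnt ω a)) ≤ 34 := by
  have hp0 : ∀ i, 0 ≤ p i := fun i => (hp i).le
  have hpa : 0 < p a := hp a
  have hpa1 : p a ≤ 1 := by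
    calc p a ≤ ∑ i, p i := Finset.single_le_sum (fun i _ => hp0 i) (Finset.mem_univ a)
      _ = 1 := hs
  have hs0 : (0:ℝ) ≤ m * p a := by positivity
  have he0 : 0 ≤ t - m * p a := by linarith
  have hep : t - m * p a ≤ p a := by push_cast at ht2 ⊢; nlinarith
  -- (EB1)  E[(N+1-t)^2] ≤ t+1
  have EB1 : expect p (fun ω : Fin m → Fin k => ((cnt ω a : ℝ) + 1 - t)^2) ≤ t + 1 := by
    have hfn : (fun ω : Fin m → Fin k => ((cnt ω a : ℝ) + 1 - t)^2)
        = fun ω => ((cnt ω a : ℝ))^2 + ((2*(1-t)) * (cnt ω a : ℝ) + (1-t)^2) :=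
      funext fun ω => by ring
    rw [hfn, expect_add, expect_add, expect_mul_left, expect_const hs, mom1 hs, mom2 hs]
    nlinarith [mul_nonneg hs0 hpa.le, mul_nonneg he0 (by linarith : (0:ℝ) ≤ p a - (t - m * p a))]
  -- (EB3)  t * E[1/(N+1)] ≤ 1
  have EB3 : t * expect p (fun ω : Fin m → Fin k => 1/((cnt ω a : ℝ) + 1)) ≤ 1 := by
    have hins := ins hs (m := m) a (fun x => 1/(x:ℝ))
    have hptwise : ∀ ω : Fin (m+1) → Fin k, (cnt ω a : ℝ) * (1/((cnt ω a : ℕ) : ℝ)) ≤ 1 := by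
      intro ω
      cases hcc : cnt ω a with
      | zero => norm_num
      | succ c =>
        have : ((c:ℝ)+1) ≠ 0 := by positivity
        push_cast
        rw [mul_one_div, div_self this]
    have hle : expect p (fun ω : Fin (m+1) → Fin k => (cnt ω a : ℝ) * (1/((cnt ω a : ℕ) : ℝ)))
        ≤ 1 := by
      calc expect p (fun ω : Fin (m+1) → Fin k => (cnt ω a : ℝ) * (1/((cnt ω a : ℕ) : ℝ)))
          ≤ expect p (fun _ : Fin (m+1) → Fin k => (1:ℝ)) := expect_mono hp0 hptwise
        _ = 1 := expect_const hs 1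
    rw [hins] at hle
    have hcast : expect p (fun ω : Fin m → Fin k => 1/(((cnt ω a + 1 : ℕ)) : ℝ))
        = expect p (fun ω : Fin m → Fin k => 1/((cnt ω a : ℝ) + 1)) := by
      refine congrArg _ (funext fun ω => ?_)
      push_cast
      ring
    rw [hcast] at hle
    have hEnn : 0 ≤ expect p (fun ω : Fin m → Fin k => 1/((cnt ω a : ℝ) + 1)) :=
      expect_nonneg hp0 fun ω => by positivity
    calc t * expect p (fun ω : Fin m → Fin k => 1/((cnt ω a : ℝ) + 1))
        ≤ ((m+1) * p a) * expect p (fun ω : Fin m → Fin k => 1/((cnt ω a : ℝ) + 1)) := by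
          apply mul_le_mul_of_nonneg_right _ hEnn
          push_cast
          linarith
      _ ≤ 1 := hle
  -- (EB2)  E[(N+1-t)^2/(N+1)] ≤ 2
  have EB2 : expect p (fun ω : Fin m → Fin k => ((cnt ω a : ℝ) + 1 - t)^2/((cnt ω a : ℝ) + 1))
      ≤ 2 := by
    have hins := ins hs (m := m) a (fun x => ((x:ℝ) - t)^2/(x:ℝ))
    have hptwise : ∀ ω : Fin (m+1) → Fin k,
        (cnt ω a : ℝ) * ((((cnt ω a : ℕ):ℝ) - t)^2/((cnt ω a : ℕ):ℝ))
          ≤ ((cnt ω a : ℝ) - t)^2 := by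
      intro ω
      cases hcc : cnt ω a with
      | zero => simpa using sq_nonneg ((0:ℝ) - t)
      | succ c =>
        have hne : ((c:ℝ)+1) ≠ 0 := by positivity
        push_cast
        rw [mul_div_cancel₀ _ hne]
    have hsqE : expect p (fun ω : Fin (m+1) → Fin k => ((cnt ω a : ℝ) - t)^2)
        ≤ 2 * ((m+1) * p a) := by
      have hfn : (fun ω : Fin (m+1) → Fin k => ((cnt ω a : ℝ) - t)^2)
          = fun ω => ((cnt ω a : ℝ))^2 + ((2*(-t)) * (cnt ω a : ℝ) + t^2) :=
        funext fun ω => by ring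
      rw [hfn, expect_add, expect_add, expect_mul_left, expect_const hs, mom1 hs, mom2 hs]
      push_cast
      have hh1 : (0:ℝ) ≤ ((m:ℝ)+1) * p a - t := by linarith
      have hh2 : ((m:ℝ)+1) * p a - t ≤ p a := by linarith
      nlinarith [mul_nonneg hh1 (by linarith : (0:ℝ) ≤ p a - (((m:ℝ)+1) * p a - t)),
        mul_nonneg hs0 hpa.le, hs0]
    have hle : ((m:ℝ)+1) * p a * expect p (fun ω : Fin m → Fin k =>
        (((cnt ω a + 1 : ℕ) : ℝ) - t)^2/((cnt ω a + 1 : ℕ) : ℝ)) ≤ 2 * ((m+1) * p a) := by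
      rw [← hins]
      calc expect p (fun ω : Fin (m+1) → Fin k =>
            (cnt ω a : ℝ) * ((((cnt ω a : ℕ):ℝ) - t)^2/((cnt ω a : ℕ):ℝ)))
          ≤ expect p (fun ω : Fin (m+1) → Fin k => ((cnt ω a : ℝ) - t)^2) :=
            expect_mono hp0 hptwise
        _ ≤ 2 * ((m+1) * p a) := hsqE
    have hcast : expect p (fun ω : Fin m → Fin k =>
          (((cnt ω a + 1 : ℕ) : ℝ) - t)^2/((cnt ω a + 1 : ℕ) : ℝ))
        = expect p (fun ω : Fin m → Fin k => ((cnt ω a : ℝ) + 1 - t)^2/((cnt ω a : ℝ) + 1)) := by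
      refine congrArg _ (funext fun ω => ?_)
      push_cast
      ring
    rw [hcast] at hle
    have hmp1 : 0 < ((m:ℝ)+1) * p a := by positivity
    have hle2 : (((m:ℝ)+1) * p a) * expect p (fun ω : Fin m → Fin k =>
        ((cnt ω a : ℝ) + 1 - t)^2/((cnt ω a : ℝ) + 1)) ≤ (((m:ℝ)+1) * p a) * 2 := by
      calc (((m:ℝ)+1) * p a) * expect p (fun ω : Fin m → Fin k =>
            ((cnt ω a : ℝ) + 1 - t)^2/((cnt ω a : ℝ) + 1)) ≤ 2 * ((m+1) * p a) := hle
        _ = (((m:ℝ)+1) * p a) * 2 := by ring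
    exact le_of_mul_le_mul_left hle2 hmp1
  -- pointwise bound on phi and conclusion
  have hrrsq : ∀ N : ℕ, (rr N)^2 ≤ 1/((N:ℝ)+1) := by
    intro N
    have h1 := rr_nonneg N
    have h2 := rr_le N
    have h3 : (0:ℝ) < (N:ℝ)+1 := by positivity
    have h4 : 1/((N:ℝ)+1) ≤ 1 := by
      rw [div_le_one h3]; linarith [Nat.cast_nonneg (α := ℝ) N]
    nlinarith
  rcases le_or_gt t 1 with hcase | hcase
  · -- small t
    have hpt : ∀ ω : Fin m → Fin k, phi t (cnt ω a)
        ≤ 16 * (cnt ω a : ℝ) + (4 * (Real.log t)^2 + 2 * (1/((cnt ω a : ℝ) + 1))) := by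
      intro ω
      set N := cnt ω a
      have hlog : (Real.log ((N:ℝ)+1))^2 ≤ 4 * (N:ℝ) := by
        have h1 : Real.log ((N:ℝ)+1) = Real.log (1 + (N:ℝ)) := by ring_nf
        have h2 : Real.log (1 + (N:ℝ)) ≤ 2 * Real.sqrt (N:ℝ) :=
          log_add_one_le (Nat.cast_nonneg N)
        have h3 : 0 ≤ Real.log ((N:ℝ)+1) :=
          Real.log_nonneg (by linarith [Nat.cast_nonneg (α := ℝ) N])
        have h4 : (Real.log ((N:ℝ)+1))^2 ≤ (2 * Real.sqrt (N:ℝ))^2 := by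
          rw [h1] at h3 ⊢
          nlinarith
        have h5 : (2 * Real.sqrt (N:ℝ))^2 = 4 * (N:ℝ) := by
          rw [mul_pow, Real.sq_sqrt (Nat.cast_nonneg N)]
          norm_num
        linarith
      have hr := hrrsq N
      rw [phi]
      nlinarith [sq_nonneg (Real.log ((N:ℝ)+1) - Real.log t + rr N),
        sq_nonneg (Real.log ((N:ℝ)+1) + Real.log t),
        sq_nonneg (Real.log ((N:ℝ)+1) - Real.log t), sq_nonneg (rr N),
        sq_nonneg (Real.log ((N:ℝ)+1)), sq_nonneg (Real.log t)]
    calc t * expect p (fun ω : Fin m → Fin k => phi t (cnt ω a))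
        ≤ t * expect p (fun ω : Fin m → Fin k =>
            16 * (cnt ω a : ℝ) + (4 * (Real.log t)^2 + 2 * (1/((cnt ω a : ℝ) + 1)))) :=
          mul_le_mul_of_nonneg_left (expect_mono hp0 hpt) ht0.le
      _ = t * (16 * (m * p a)) + (4 * (t * (Real.log t)^2)
            + 2 * (t * expect p (fun ω : Fin m → Fin k => 1/((cnt ω a : ℝ) + 1)))) := by
          rw [expect_add, expect_add, expect_mul_left, expect_mul_left, expect_mul_left,
            expect_const hs, mom1 hs]
          ring
      _ ≤ 34 := by
          have h1 : t * (Real.log t)^2 ≤ 4 := mul_sq_log_le ht0 hcase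
          have h2 : t * (16 * (m * p a)) ≤ 16 := by nlinarith
          linarith
  · -- large t
    have hpt : ∀ ω : Fin m → Fin k, phi t (cnt ω a)
        ≤ (8/t^2) * ((cnt ω a : ℝ) + 1 - t)^2
          + ((8/t) * (((cnt ω a : ℝ) + 1 - t)^2/((cnt ω a : ℝ) + 1))
            + 2 * (1/((cnt ω a : ℝ) + 1))) := by
      intro ω
      set N := cnt ω a
      have hN1 : (0:ℝ) < (N:ℝ)+1 := by positivity
      have hkey := sq_log_ratio_le hN1 ht0
      have h2r : phi t N ≤ 2*(Real.log ((N:ℝ)+1) - Real.log t)^2 + 2*(rr N)^2 := by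
        rw [phi]
        nlinarith [sq_nonneg (Real.log ((N:ℝ)+1) - Real.log t + rr N)]
      calc phi t N ≤ 2*(Real.log ((N:ℝ)+1) - Real.log t)^2 + 2*(rr N)^2 := h2r
        _ ≤ 2*(4*(((N:ℝ)+1) - t)^2/t^2 + 4*((((N:ℝ)+1) - t)^2/(t*((N:ℝ)+1))))
              + 2*(1/((N:ℝ)+1)) := by linarith [hkey, hrrsq N]
        _ = (8/t^2) * ((N:ℝ) + 1 - t)^2
              + ((8/t) * (((N:ℝ) + 1 - t)^2/((N:ℝ) + 1)) + 2 * (1/((N:ℝ) + 1))) := by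
            field_simp
            ring
    calc t * expect p (fun ω : Fin m → Fin k => phi t (cnt ω a))
        ≤ t * expect p (fun ω : Fin m → Fin k =>
            (8/t^2) * ((cnt ω a : ℝ) + 1 - t)^2
              + ((8/t) * (((cnt ω a : ℝ) + 1 - t)^2/((cnt ω a : ℝ) + 1))
                + 2 * (1/((cnt ω a : ℝ) + 1)))) :=
          mul_le_mul_of_nonneg_left (expect_mono hp0 hpt) ht0.le
      _ = t * ((8/t^2) * expect p (fun ω : Fin m → Fin k => ((cnt ω a : ℝ) + 1 - t)^2)
            + ((8/t) * expect p (fun ω : Fin m → Fin k =>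
                ((cnt ω a : ℝ) + 1 - t)^2/((cnt ω a : ℝ) + 1))
              + 2 * expect p (fun ω : Fin m → Fin k => 1/((cnt ω a : ℝ) + 1)))) := by
          rw [expect_add, expect_add, expect_mul_left, expect_mul_left, expect_mul_left]
      _ ≤ 34 := by
          set X := expect p (fun ω : Fin m → Fin k => ((cnt ω a : ℝ) + 1 - t)^2) with hX
          set Y := expect p (fun ω : Fin m → Fin k =>
            ((cnt ω a : ℝ) + 1 - t)^2/((cnt ω a : ℝ) + 1)) with hY
          set Z := expect p (fun ω : Fin m → Fin k => 1/((cnt ω a : ℝ) + 1)) with hZ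
          have hXnn : 0 ≤ X := expect_nonneg hp0 fun ω => sq_nonneg _
          have hYnn : 0 ≤ Y := expect_nonneg hp0 fun ω => by positivity
          have hZnn : 0 ≤ Z := expect_nonneg hp0 fun ω => by positivity
          have htne : t ≠ 0 := ht0.ne'
          have e : t * ((8/t^2) * X + ((8/t) * Y + 2 * Z)) = (8*X)/t + (8*Y + 2*(t*Z)) := by
            field_simp
          rw [e]
          have h1 : (8*X)/t ≤ 16 := by
            rw [div_le_iff₀ ht0]
            nlinarith
          have h2 : 8*Y ≤ 16 := by linarith
          linarith

/-- per-letter term of the KL divergence: `(c log c - c log t)/n` -/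
noncomputable def gg (n : ℕ) (t : ℝ) (c : ℕ) : ℝ :=
  ((c:ℝ) * Real.log c - (c:ℝ) * Real.log t)/n

lemma klDiv_eq (hp : ∀ i, 0 < p i) {n : ℕ} (hn : 0 < n) (ω : Fin n → Fin k) :
    klDiv (empDist ω) p = ∑ i, gg n ((n:ℝ) * p i) (cnt ω i) := by
  have hnR : (0:ℝ) < (n:ℝ) := by exact_mod_cast hn
  rw [klDiv]
  refine Finset.sum_congr rfl fun i _ => ?_
  have hemp : empDist ω i = (cnt ω i : ℝ)/n := by
    rw [empDist, cnt]
    congr 1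
    exact_mod_cast congrArg Nat.cast (Finset.card_filter (fun j => ω j = i) Finset.univ)
  rw [hemp, gg]
  rcases Nat.eq_zero_or_pos (cnt ω i) with hc | hc
  · rw [hc]
    simp
  · have hcR : (0:ℝ) < (cnt ω i : ℝ) := by exact_mod_cast hc
    have hdd : ((cnt ω i:ℝ)/n)/p i = (cnt ω i:ℝ)/((n:ℝ) * p i) := by
      rw [div_div]
    rw [hdd, Real.log_div hcR.ne' (mul_pos hnR (hp i)).ne']
    field_simp

lemma dd_eq {n : ℕ} (hn : 0 < n) (t : ℝ) (c : ℕ) :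
    gg n t (c+1) - gg n t c - 1/n = (1/n) * (Real.log ((c:ℝ)+1) - Real.log t - rr c) := by
  have hnR : (0:ℝ) < (n:ℝ) := by exact_mod_cast hn
  rw [gg, gg, rr]
  push_cast
  field_simp
  ring

lemma phi_nonneg (t : ℝ) (m : ℕ) : 0 ≤ phi t m := sq_nonneg _

lemma diff_bound (hp : ∀ i, 0 < p i) {n : ℕ} (hn : 0 < n)
    (ω : Fin n → Fin k) (j : Fin n) (b : Fin k) :
    (klDiv (empDist (Function.update ω j b)) p - klDiv (empDist ω) p)^2
      ≤ 2/(n:ℝ)^2 * (phi ((n:ℝ) * p b) (cnt ω b)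
          + phi ((n:ℝ) * p (ω j)) (cnt ω (ω j) - 1)) := by
  have hnR : (0:ℝ) < (n:ℝ) := by exact_mod_cast hn
  rcases eq_or_ne b (ω j) with rfl | hb
  · rw [Function.update_eq_self]
    have h0 : klDiv (empDist ω) p - klDiv (empDist ω) p = 0 := sub_self _
    rw [h0]
    have h1 := phi_nonneg ((n:ℝ) * p (ω j)) (cnt ω (ω j))
    have h2 := phi_nonneg ((n:ℝ) * p (ω j)) (cnt ω (ω j) - 1)
    have h3 : (0:ℝ) ≤ 2/(n:ℝ)^2 := by positivity
    have h4 : (0:ℝ) ≤ 2/(n:ℝ)^2 * (phi ((n:ℝ) * p (ω j)) (cnt ω (ω j))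
        + phi ((n:ℝ) * p (ω j)) (cnt ω (ω j) - 1)) := mul_nonneg h3 (add_nonneg h1 h2)
    simpa using h4
  · -- counts after the update
    have hcb : cnt (Function.update ω j b) b = cnt ω b + 1 := by
      have h := cnt_update ω j b b
      rw [if_neg (Ne.symm hb), if_pos rfl] at h
      omega
    have hM1 : 1 ≤ cnt ω (ω j) := one_le_cnt ω j
    have hca : cnt (Function.update ω j b) (ω j) = cnt ω (ω j) - 1 := by
      have h := cnt_update ω j b (ω j)
      rw [if_pos rfl, if_neg hb] at h
      omega
    have hother : ∀ i, i ≠ ω j → i ≠ b → cnt (Function.update ω j b) i = cnt ω i := by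
      intro i h1 h2
      have h := cnt_update ω j b i
      rw [if_neg (fun hh => h1 hh.symm), if_neg (fun hh => h2 hh.symm)] at h
      omega
    -- the difference of KL divergences
    rw [klDiv_eq hp hn, klDiv_eq hp hn, ← Finset.sum_sub_distrib]
    have hzero : ∀ i ∈ Finset.univ, i ∉ ({ω j, b} : Finset (Fin k)) →
        gg n ((n:ℝ) * p i) (cnt (Function.update ω j b) i) - gg n ((n:ℝ) * p i) (cnt ω i)
          = 0 := by
      intro i _ hi
      simp only [Finset.mem_insert, Finset.mem_singleton] at hi
      push_neg at hi
      rw [hother i hi.1 hi.2, sub_self]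
    rw [← Finset.sum_subset (Finset.subset_univ ({ω j, b} : Finset (Fin k))) hzero,
      Finset.sum_pair (Ne.symm hb), hcb, hca]
    set M := cnt ω (ω j) with hMdef
    set ta := (n:ℝ) * p (ω j) with hta
    set tb := (n:ℝ) * p b with htb
    have hMsucc : M = (M - 1) + 1 := (Nat.succ_pred_eq_of_pos hM1).symm
    have hd1 : gg n tb (cnt ω b + 1) - gg n tb (cnt ω b) - 1/n
        = (1/n) * (Real.log ((cnt ω b : ℝ)+1) - Real.log tb - rr (cnt ω b)) :=
      dd_eq hn tb (cnt ω b)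
    have hd2 : gg n ta ((M-1)+1) - gg n ta (M-1) - 1/n
        = (1/n) * (Real.log (((M-1 : ℕ):ℝ)+1) - Real.log ta - rr (M-1)) :=
      dd_eq hn ta (M-1)
    have hsplit : gg n ta (M - 1) - gg n ta M + (gg n tb (cnt ω b + 1) - gg n tb (cnt ω b))
        = (gg n tb (cnt ω b + 1) - gg n tb (cnt ω b) - 1/n)
          - (gg n ta ((M-1)+1) - gg n ta (M-1) - 1/n) := by
      rw [← hMsucc]
      ring
    rw [hsplit]
    have hphib : ((1:ℝ)/n * (Real.log ((cnt ω b : ℝ)+1) - Real.log tb - rr (cnt ω b)))^2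
        = (1/(n:ℝ)^2) * phi tb (cnt ω b) := by
      rw [phi]
      push_cast
      ring
    have hphia : ((1:ℝ)/n * (Real.log (((M-1 : ℕ):ℝ)+1) - Real.log ta - rr (M-1)))^2
        = (1/(n:ℝ)^2) * phi ta (M-1) := by
      rw [phi]
      push_cast
      ring
    have hsq : ∀ x y : ℝ, (x - y)^2 ≤ 2 * x^2 + 2 * y^2 := by
      intro x y
      nlinarith [sq_nonneg (x + y)]
    calc ((gg n tb (cnt ω b + 1) - gg n tb (cnt ω b) - 1/n)
          - (gg n ta ((M-1)+1) - gg n ta (M-1) - 1/n))^2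
        ≤ 2 * ((gg n tb (cnt ω b + 1) - gg n tb (cnt ω b) - 1/n))^2
          + 2 * ((gg n ta ((M-1)+1) - gg n ta (M-1) - 1/n))^2 := hsq _ _
      _ = 2 * ((1/(n:ℝ)^2) * phi tb (cnt ω b)) + 2 * ((1/(n:ℝ)^2) * phi ta (M-1)) := by
          rw [hd1, hd2, hphib, hphia]
      _ = 2/(n:ℝ)^2 * (phi tb (cnt ω b) + phi ta (M - 1)) := by ring

end KLVar

theorem kl_variance_le_k_div_n_sq :
    ∃ C : ℝ, 0 < C ∧ ∀ (n k : ℕ), 1 ≤ n → 2 ≤ k →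
      ∀ p : Fin k → ℝ, (∀ i, 0 < p i) → (∑ i, p i = 1) →
        var p (fun ω : Fin n → Fin k => klDiv (empDist ω) p) ≤
          C * k / (n : ℝ) ^ 2 := by
  classical
  refine ⟨136, by norm_num, ?_⟩
  intro n k hn _hk p hp hs
  obtain ⟨m, rfl⟩ : ∃ m, n = m + 1 := ⟨n - 1, (Nat.succ_pred_eq_of_pos hn).symm⟩
  open KLVar in
  set nR : ℝ := ((m + 1 : ℕ) : ℝ) with hnR
  have hnRpos : 0 < nR := by rw [hnR]; exact_mod_cast Nat.succ_pos m
  have hp0 : ∀ i, 0 ≤ p i := fun i => (hp i).le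
  set f : (Fin (m+1) → Fin k) → ℝ := fun ω => klDiv (empDist ω) p with hf
  -- Efron–Stein
  have hES := efron_stein hp0 hs (m+1) f
  -- bound each coordinate's term
  have step_j : ∀ j : Fin (m+1),
      expect p (fun ω => ∑ b, p b * (f (Function.update ω j b) - f ω)^2)
        ≤ (2/nR^2) * expect p (fun ω : Fin (m+1) → Fin k =>
              ∑ b, p b * phi (nR * p b) (cnt ω b))
          + (2/nR^2) * expect p (fun ω : Fin (m+1) → Fin k =>
              phi (nR * p (ω j)) (cnt ω (ω j) - 1)) := by
    intro j
    have hpt : ∀ ω : Fin (m+1) → Fin k, ∑ b, p b * (f (Function.update ω j b) - f ω)^2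
        ≤ (2/nR^2) * (∑ b, p b * phi (nR * p b) (cnt ω b))
          + (2/nR^2) * phi (nR * p (ω j)) (cnt ω (ω j) - 1) := by
      intro ω
      have h1 : ∀ b, p b * (f (Function.update ω j b) - f ω)^2
          ≤ p b * ((2/nR^2) * (phi (nR * p b) (cnt ω b)
              + phi (nR * p (ω j)) (cnt ω (ω j) - 1))) := fun b =>
        mul_le_mul_of_nonneg_left (diff_bound hp (Nat.succ_pos m) ω j b) (hp0 b)
      calc ∑ b, p b * (f (Function.update ω j b) - f ω)^2
          ≤ ∑ b, p b * ((2/nR^2) * (phi (nR * p b) (cnt ω b)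
              + phi (nR * p (ω j)) (cnt ω (ω j) - 1))) := Finset.sum_le_sum fun b _ => h1 b
        _ = (2/nR^2) * (∑ b, p b * phi (nR * p b) (cnt ω b))
              + (2/nR^2) * phi (nR * p (ω j)) (cnt ω (ω j) - 1) := by
            rw [Finset.sum_congr rfl fun b _ => (by ring :
                p b * ((2/nR^2) * (phi (nR * p b) (cnt ω b)
                    + phi (nR * p (ω j)) (cnt ω (ω j) - 1)))
                  = (2/nR^2) * (p b * phi (nR * p b) (cnt ω b))
                    + ((2/nR^2) * phi (nR * p (ω j)) (cnt ω (ω j) - 1)) * p b),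
              Finset.sum_add_distrib]
            simp only [← Finset.mul_sum]
            rw [hs]
            ring
    calc expect p (fun ω => ∑ b, p b * (f (Function.update ω j b) - f ω)^2)
        ≤ expect p (fun ω : Fin (m+1) → Fin k =>
            (2/nR^2) * (∑ b, p b * phi (nR * p b) (cnt ω b))
              + (2/nR^2) * phi (nR * p (ω j)) (cnt ω (ω j) - 1)) := expect_mono hp0 hpt
      _ = _ := by
          rw [expect_add, expect_mul_left, expect_mul_left]
  -- key bound, big side
  have keybig : ∀ b, (nR * p b) * expect p
      (fun ω : Fin (m+1) → Fin k => phi (nR * p b) (cnt ω b)) ≤ 34 := by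
    intro b
    refine key hp hs b (m+1) (nR * p b) (mul_pos hnRpos (hp b)) ?_ ?_
    · rw [hnR]
    · have : (0:ℝ) ≤ p b := hp0 b
      push_cast [hnR]
      nlinarith
  have keysmall : ∀ a, (nR * p a) * expect p
      (fun ω : Fin m → Fin k => phi (nR * p a) (cnt ω a)) ≤ 34 := by
    intro a
    refine key hp hs a m (nR * p a) (mul_pos hnRpos (hp a)) ?_ ?_
    · have : (0:ℝ) ≤ p a := hp0 a
      push_cast [hnR]
      nlinarith
    · exact le_of_eq (by push_cast [hnR]; ring)
  -- total bound for the resampling part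
  set X := expect p (fun ω : Fin (m+1) → Fin k =>
    ∑ b, p b * phi (nR * p b) (cnt ω b)) with hX
  have hXbound : nR * X ≤ 34 * k := by
    rw [hX, expect_sum, Finset.mul_sum]
    have hb : ∀ b, nR * expect p
        (fun ω : Fin (m+1) → Fin k => p b * phi (nR * p b) (cnt ω b)) ≤ 34 := by
      intro b
      rw [expect_mul_left, ← mul_assoc]
      exact keybig b
    calc ∑ b, nR * expect p (fun ω : Fin (m+1) → Fin k => p b * phi (nR * p b) (cnt ω b))
        ≤ ∑ _b : Fin k, (34:ℝ) := Finset.sum_le_sum fun b _ => hb b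
      _ = 34 * k := by
          rw [Finset.sum_const, Finset.card_univ, Fintype.card_fin, nsmul_eq_mul]
          ring
  set S := ∑ j : Fin (m+1), expect p
    (fun ω : Fin (m+1) → Fin k => phi (nR * p (ω j)) (cnt ω (ω j) - 1)) with hS
  have hSnn : 0 ≤ S := by
    rw [hS]
    exact Finset.sum_nonneg fun j _ => expect_nonneg hp0 fun ω => phi_nonneg _ _
  have hXnn : 0 ≤ X := by
    rw [hX]
    exact expect_nonneg hp0 fun ω =>
      Finset.sum_nonneg fun b _ => mul_nonneg (hp0 b) (phi_nonneg _ _)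
  have hSbound : S ≤ 34 * k := by
    have hsum2 : S = ∑ a, (nR * p a) * expect p
        (fun ω : Fin m → Fin k => phi (nR * p a) (cnt ω a)) := by
      rw [hS, ← expect_sum]
      have hpt : (fun ω : Fin (m+1) → Fin k =>
          ∑ j, phi (nR * p (ω j)) (cnt ω (ω j) - 1))
          = fun ω => ∑ a, (cnt ω a : ℝ) * phi (nR * p a) (cnt ω a - 1) :=
        funext fun ω => sum_comp_cnt ω (fun a => phi (nR * p a) (cnt ω a - 1))
      rw [hpt, expect_sum]
      refine Finset.sum_congr rfl fun a _ => ?_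
      have h := ins hs (m := m) a (fun x => phi (nR * p a) (x - 1))
      simp only [Nat.add_sub_cancel] at h
      rw [h, hnR]
      push_cast
      ring
    rw [hsum2]
    calc ∑ a, (nR * p a) * expect p (fun ω : Fin m → Fin k => phi (nR * p a) (cnt ω a))
        ≤ ∑ _a : Fin k, (34:ℝ) := Finset.sum_le_sum fun a _ => keysmall a
      _ = 34 * k := by
          rw [Finset.sum_const, Finset.card_univ, Fintype.card_fin, nsmul_eq_mul]
          ring
  -- put everything together
  have htotal : (∑ j : Fin (m+1), expect p
      (fun ω => ∑ b, p b * (f (Function.update ω j b) - f ω)^2))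
      ≤ nR * ((2/nR^2) * X) + (2/nR^2) * S := by
    calc (∑ j : Fin (m+1), expect p
        (fun ω => ∑ b, p b * (f (Function.update ω j b) - f ω)^2))
        ≤ ∑ j : Fin (m+1), ((2/nR^2) * X + (2/nR^2) * expect p
            (fun ω : Fin (m+1) → Fin k => phi (nR * p (ω j)) (cnt ω (ω j) - 1))) :=
          Finset.sum_le_sum fun j _ => step_j j
      _ = nR * ((2/nR^2) * X) + (2/nR^2) * S := by
          rw [Finset.sum_add_distrib, Finset.sum_const, Finset.card_univ, Fintype.card_fin,
            nsmul_eq_mul, ← Finset.mul_sum, ← hS, hnR]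
  have hfinal : nR * ((2/nR^2) * X) + (2/nR^2) * S ≤ 136 * k / nR^2 := by
    have hc : (0:ℝ) ≤ 2/nR^2 := by positivity
    have h1 : nR * ((2/nR^2) * X) = (2/nR^2) * (nR * X) := by ring
    have h2 : (2/nR^2) * (nR * X) ≤ (2/nR^2) * (34*k) := mul_le_mul_of_nonneg_left hXbound hc
    have h3 : (2/nR^2) * S ≤ (2/nR^2) * (34*k) := mul_le_mul_of_nonneg_left hSbound hc
    have h4 : (2/nR^2) * (34*(k:ℝ)) + (2/nR^2) * (34*k) = 136 * k / nR^2 := by ring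
    linarith
  calc var p f ≤ _ := hES
    _ ≤ nR * ((2/nR^2) * X) + (2/nR^2) * S := htotal
    _ ≤ 136 * k / nR^2 := hfinal
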